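/- Let B ∈ ℝ^{n×n} be a symmetric matrix, let N ≥ 1, and let w₁, …, w_N be independent standard Gaussian random vectors in ℝⁿ. Then E[ ( (1/N) Σ_{i=1}^N wᵢᵀ B wᵢ − trace(B) )² ] = (2/N) ‖B‖_F², i.e., the variance of the N-sample Girard–Hutchinson trace estimator equals (2/N) times the squared Frobenius norm of B. -/

import Mathlib

open MeasureTheory ProbabilityTheory Matrix

/-- Matrix logarithm of a real symmetric matrix, obtained by applying the real logarithm
to the eigenvalues in a spectral decomposition. -/
noncomputable def matLog {n : ℕ} (B : Matrix (Fin n) (Fin n) ℝ) : Matrix (Fin n) (Fin n) ℝ :=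
  if hB : B.IsHermitian then
    (hB.eigenvectorUnitary : Matrix (Fin n) (Fin n) ℝ) *
      Matrix.diagonal (fun i => Real.log (hB.eigenvalues i)) *
      (star (hB.eigenvectorUnitary : Matrix (Fin n) (Fin n) ℝ))
  else 0

open scoped Classical in
/-- `B^{-1/2}`: the inverse of the unique positive semidefinite square root of a
positive semidefinite matrix `B`. -/
noncomputable def invSqrt {n : ℕ} (B : Matrix (Fin n) (Fin n) ℝ) : Matrix (Fin n) (Fin n) ℝ :=
  if hB : B.PosSemidef then
    ((hB.1.eigenvectorUnitary : Matrix (Fin n) (Fin n) ℝ) *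
      Matrix.diagonal (Real.sqrt ∘ hB.1.eigenvalues) *
      (star (hB.1.eigenvectorUnitary : Matrix (Fin n) (Fin n) ℝ)))⁻¹
  else 0

/-- Squared Frobenius norm of a matrix. -/
noncomputable def frobSq {m n : ℕ} (H : Matrix (Fin m) (Fin n) ℝ) : ℝ :=
  ∑ i, ∑ j, (H i j) ^ 2

/-- Singular values of a matrix (square roots of the eigenvalues of `HᴴH`). -/
noncomputable def singVals {m n : ℕ} (H : Matrix (Fin m) (Fin n) ℝ) : Fin n → ℝ :=
  fun i => Real.sqrt ((by simpa using Matrix.isHermitian_conjTranspose_mul_self H : (Hᵀ * H).IsHermitian).eigenvalues i)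

/-- Nuclear norm: sum of the singular values. -/
noncomputable def nuclearNorm {m n : ℕ} (H : Matrix (Fin m) (Fin n) ℝ) : ℝ :=
  ∑ i, singVals H i

/-- Spectral norm: largest singular value. -/
noncomputable def specNorm {m n : ℕ} (H : Matrix (Fin m) (Fin n) ℝ) : ℝ :=
  ⨆ i, singVals H i

/-- Eigenvalues of a symmetric matrix, sorted in decreasing order
(`eigDesc B i` is the `i`-th largest eigenvalue). -/
noncomputable def eigDesc {n : ℕ} (B : Matrix (Fin n) (Fin n) ℝ) : Fin n → ℝ :=
  if hB : B.IsHermitian then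
    fun i => (hB.eigenvalues ∘ Tuple.sort hB.eigenvalues) i.rev
  else 0

/-- Law of a standard Gaussian random vector in `ℝⁿ` (i.i.d. `gaussianReal 0 1` entries). -/
noncomputable def stdGaussian (n : ℕ) : Measure (Fin n → ℝ) :=
  Measure.pi fun _ => gaussianReal 0 1

/-- Law of a random `n × ℓ` matrix with i.i.d. standard Gaussian entries. -/
noncomputable def stdGaussianMatrix (n ℓ : ℕ) : Measure (Fin n → Fin ℓ → ℝ) :=
  Measure.pi fun _ => Measure.pi fun _ => gaussianReal 0 1

/-- The truncated-spectral-decomposition preconditioner `P_r = A_r + I`, where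
`A_r = U_r Λ_r U_rᵀ` keeps the `r` leading eigenvalues. -/
noncomputable def truncP {n : ℕ} (U : Matrix (Fin n) (Fin n) ℝ) (lam : Fin n → ℝ) (r : ℕ) :
    Matrix (Fin n) (Fin n) ℝ :=
  U * Matrix.diagonal (fun i : Fin n => if (i : ℕ) < r then lam i else 0) * Uᵀ + 1

/-- The idealized preconditioned matrix `M_r = P_r^{-1/2} (A + I) P_r^{-1/2}`. -/
noncomputable def truncM {n : ℕ} (A U : Matrix (Fin n) (Fin n) ℝ) (lam : Fin n → ℝ) (r : ℕ) :
    Matrix (Fin n) (Fin n) ℝ :=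
  invSqrt (truncP U lam r) * (A + 1) * invSqrt (truncP U lam r)

/-- The Nyström approximation `Â = AΩ(ΩᵀAΩ)⁻¹ΩᵀA`. -/
noncomputable def nystrom {n ℓ : ℕ} (A : Matrix (Fin n) (Fin n) ℝ)
    (Ω : Matrix (Fin n) (Fin ℓ) ℝ) : Matrix (Fin n) (Fin n) ℝ :=
  A * Ω * (Ωᵀ * A * Ω)⁻¹ * Ωᵀ * A

/-- The Nyström-preconditioned matrix `M̂ = P̂^{-1/2} (A + I) P̂^{-1/2}` with `P̂ = Â + I`. -/
noncomputable def nysPrec {n ℓ : ℕ} (A : Matrix (Fin n) (Fin n) ℝ)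
    (Ω : Matrix (Fin n) (Fin ℓ) ℝ) : Matrix (Fin n) (Fin n) ℝ :=
  invSqrt (nystrom A Ω + 1) * (A + 1) * invSqrt (nystrom A Ω + 1)


section AuxGH
open Real

-- integrability of x^k * exp(-x^2/2) for k ≤ 4
lemma aux_x4_bound (x : ℝ) : x ^ 4 * rexp (-(1/2) * x ^ 2) ≤ 64 * rexp (-(1/4) * x ^ 2) := by
  have hb : rexp ((1/8) * x ^ 2) ≥ 1 + (1/8) * x ^ 2 := by
    have := Real.add_one_le_exp ((1/8) * x ^ 2); linarith
  have hx : (0:ℝ) ≤ (1/8) * x ^ 2 := by positivity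
  have hb2 : rexp ((1/4) * x ^ 2) = rexp ((1/8) * x ^ 2) ^ 2 := by
    rw [← Real.exp_nat_mul]; ring_nf
  have h1 : x ^ 4 ≤ 64 * rexp ((1/4) * x ^ 2) := by
    rw [hb2]; nlinarith [sq_nonneg x, Real.exp_pos ((1/8) * x ^ 2)]
  have h2 : rexp (-(1/2) * x ^ 2) * rexp ((1/4) * x ^ 2) = rexp (-(1/4) * x ^ 2) := by
    rw [← Real.exp_add]; ring_nf
  have h3 : (0:ℝ) < rexp ((1/4) * x ^ 2) := Real.exp_pos _
  calc x ^ 4 * rexp (-(1/2) * x ^ 2)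
      ≤ (64 * rexp ((1/4) * x ^ 2)) * rexp (-(1/2) * x ^ 2) := by
        apply mul_le_mul_of_nonneg_right h1 (Real.exp_pos _).le
    _ = 64 * rexp (-(1/4) * x ^ 2) := by rw [mul_assoc, mul_comm (rexp _), h2]

lemma integrable_pow_gauss {k : ℕ} (hk : k ≤ 4) :
    Integrable (fun x : ℝ => x ^ k * rexp (-(1/2) * x ^ 2)) := by
  have hmeas : AEStronglyMeasurable (fun x : ℝ => x ^ k * rexp (-(1/2) * x ^ 2)) volume := by
    apply Continuous.aestronglyMeasurable; continuity
  have h64 : Integrable (fun x : ℝ => 64 * rexp (-(1/4) * x ^ 2)) :=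
    (integrable_exp_neg_mul_sq (by norm_num : (0:ℝ) < 1/4)).const_mul 64
  have h1 : Integrable (fun x : ℝ => rexp (-(1/2) * x ^ 2)) :=
    integrable_exp_neg_mul_sq (by norm_num : (0:ℝ) < 1/2)
  refine (h1.add h64).mono' hmeas ?_
  filter_upwards with x
  have he : (0:ℝ) < rexp (-(1/2) * x ^ 2) := Real.exp_pos _
  have hb := aux_x4_bound x
  have habs : |x| ^ k ≤ 1 + x ^ 4 := by
    rcases le_or_gt (|x|) 1 with h | h
    · have : |x| ^ k ≤ 1 := pow_le_one₀ (abs_nonneg x) h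
      nlinarith [sq_nonneg (x^2)]
    · have h4 : |x| ^ k ≤ |x| ^ 4 := pow_le_pow_right₀ h.le hk
      have : |x| ^ 4 = x ^ 4 := by rw [← abs_pow, abs_of_nonneg (by positivity)]
      nlinarith
  have : ‖x ^ k * rexp (-(1/2) * x ^ 2)‖ = |x| ^ k * rexp (-(1/2) * x ^ 2) := by
    rw [norm_mul, norm_pow, Real.norm_eq_abs, Real.norm_eq_abs, abs_of_pos he]
  rw [this]
  have h2 : |x| ^ k * rexp (-(1/2) * x ^ 2) ≤ (1 + x ^ 4) * rexp (-(1/2) * x ^ 2) :=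
    mul_le_mul_of_nonneg_right habs he.le
  simp only [Pi.add_apply]
  nlinarith

noncomputable def G (k : ℕ) : ℝ := ∫ x : ℝ, x ^ k * rexp (-(1/2) * x ^ 2)

lemma G_zero : G 0 = √(2 * π) := by
  simp only [G, pow_zero, one_mul]
  rw [integral_gaussian]
  norm_num [Real.sqrt_mul_self, mul_comm]

lemma G_one : G 1 = 0 := by
  have hd : ∀ x : ℝ, HasDerivAt (fun y : ℝ => -rexp (-(1/2) * y ^ 2))
      (x ^ 1 * rexp (-(1/2) * x ^ 2)) x := by
    intro x
    have h := (((hasDerivAt_pow 2 x).const_mul (-(1/2) : ℝ)).exp).neg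
    refine h.congr_deriv ?_
    ring
  have := integral_eq_zero_of_hasDerivAt_of_integrable hd (integrable_pow_gauss (by norm_num))
    ((integrable_exp_neg_mul_sq (by norm_num : (0:ℝ) < 1/2)).neg)
  simpa [G] using this

lemma G_rec (k : ℕ) (hk : k + 2 ≤ 4) : G (k + 2) = (k + 1) * G k := by
  have hd : ∀ x : ℝ, HasDerivAt (fun y : ℝ => y ^ (k+1) * rexp (-(1/2) * y ^ 2))
      ((k+1 : ℝ) * (x ^ k * rexp (-(1/2) * x ^ 2)) - x ^ (k+2) * rexp (-(1/2) * x ^ 2)) x := by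
    intro x
    have h := (hasDerivAt_pow (k+1) x).mul (((hasDerivAt_pow 2 x).const_mul (-(1/2) : ℝ)).exp)
    refine h.congr_deriv ?_
    push_cast
    ring
  have hik : Integrable (fun x : ℝ => x ^ k * rexp (-(1/2) * x ^ 2)) :=
    integrable_pow_gauss (by omega)
  have hik2 : Integrable (fun x : ℝ => x ^ (k+2) * rexp (-(1/2) * x ^ 2)) :=
    integrable_pow_gauss hk
  have hint : Integrable (fun x : ℝ =>
      (k+1 : ℝ) * (x ^ k * rexp (-(1/2) * x ^ 2)) - x ^ (k+2) * rexp (-(1/2) * x ^ 2)) :=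
    (hik.const_mul _).sub hik2
  have h0 := integral_eq_zero_of_hasDerivAt_of_integrable hd hint
    (integrable_pow_gauss (by omega))
  rw [integral_sub (hik.const_mul _) hik2, MeasureTheory.integral_const_mul] at h0
  have : G (k+2) = ∫ x : ℝ, x ^ (k+2) * rexp (-(1/2) * x ^ 2) := rfl
  rw [this]
  have : G k = ∫ x : ℝ, x ^ k * rexp (-(1/2) * x ^ 2) := rfl
  rw [this]
  linarith

lemma G_two : G 2 = √(2 * π) := by rw [show 2 = 0 + 2 from rfl, G_rec 0 (by norm_num), G_zero]; norm_num [Real.sqrt_mul_self, mul_comm]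
lemma G_three : G 3 = 0 := by rw [show 3 = 1 + 2 from rfl, G_rec 1 (by norm_num), G_one]; ring
lemma G_four : G 4 = 3 * √(2 * π) := by rw [show 4 = 2 + 2 from rfl, G_rec 2 (by norm_num), G_two]; norm_num [Real.sqrt_mul_self, mul_comm]


lemma pdf_eq (x : ℝ) : gaussianPDFReal 0 1 x = (√(2 * π))⁻¹ * rexp (-(1/2) * x ^ 2) := by
  simp only [gaussianPDFReal_def, NNReal.coe_one, mul_one, sub_zero]
  congr 1
  ring

noncomputable def mom (k : ℕ) : ℝ := ∫ x : ℝ, x ^ k ∂(gaussianReal 0 1)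

lemma gaussianReal_eq : gaussianReal 0 1 =
    volume.withDensity (fun x => ((√(2 * π))⁻¹ * rexp (-(1/2) * x ^ 2) : ℝ).toNNReal) := by
  rw [gaussianReal_of_var_ne_zero 0 one_ne_zero]
  congr 1
  ext x
  rw [gaussianPDF, pdf_eq, ENNReal.ofReal]

lemma meas_dens : Measurable (fun x : ℝ => ((√(2 * π))⁻¹ * rexp (-(1/2) * x ^ 2) : ℝ).toNNReal) := by
  apply Measurable.real_toNNReal
  exact (Real.measurable_exp.comp ((measurable_id.pow_const 2).const_mul _)).const_mul _

lemma mom_eq (k : ℕ) : mom k = (√(2 * π))⁻¹ * G k := by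
  rw [mom, gaussianReal_eq, integral_withDensity_eq_integral_smul meas_dens]
  rw [G, ← MeasureTheory.integral_const_mul]
  congr 1
  ext x
  have h : (0:ℝ) ≤ (√(2 * π))⁻¹ * rexp (-(1/2) * x ^ 2) := by positivity
  rw [NNReal.smul_def, Real.coe_toNNReal _ h, smul_eq_mul]
  ring

lemma sqrt2pi_pos : (0:ℝ) < √(2 * π) := Real.sqrt_pos.mpr (by positivity)

lemma mom_zero : mom 0 = 1 := by
  rw [mom_eq, G_zero, inv_mul_cancel₀ sqrt2pi_pos.ne']
lemma mom_one : mom 1 = 0 := by rw [mom_eq, G_one, mul_zero]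
lemma mom_two : mom 2 = 1 := by rw [mom_eq, G_two, inv_mul_cancel₀ sqrt2pi_pos.ne']
lemma mom_three : mom 3 = 0 := by rw [mom_eq, G_three, mul_zero]
lemma mom_four : mom 4 = 3 := by
  rw [mom_eq, G_four]
  field_simp

lemma integrable_pow_gaussianReal {k : ℕ} (hk : k ≤ 4) :
    Integrable (fun x : ℝ => x ^ k) (gaussianReal 0 1) := by
  rw [gaussianReal_eq, integrable_withDensity_iff_integrable_smul meas_dens]
  apply (((integrable_pow_gauss hk).const_mul ((√(2 * π))⁻¹)).congr)
  filter_upwards with x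
  have h : (0:ℝ) ≤ (√(2 * π))⁻¹ * rexp (-(1/2) * x ^ 2) := by positivity
  rw [NNReal.smul_def, Real.coe_toNNReal _ h, smul_eq_mul]
  ring

theorem pi_integrable_prod {m : ℕ} {E : Type} [MeasurableSpace E] {μ : Measure E} [SigmaFinite μ]
    {f : Fin m → E → ℝ} (hf : ∀ i, Integrable (f i) μ) :
    Integrable (fun x : Fin m → E => ∏ i, f i (x i)) (Measure.pi fun _ => μ) := by
  induction m with
  | zero =>
      rw [Measure.pi_of_empty]
      simp only [Finset.univ_eq_empty, Finset.prod_empty]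
      exact integrable_const _
  | succ m ih =>
      have hmp := ((measurePreserving_piFinSuccAbove (fun _ : Fin (m+1) => μ) 0).symm)
      rw [← hmp.integrable_comp_emb (MeasurableEquiv.measurableEmbedding _)]
      simp_rw [MeasurableEquiv.piFinSuccAbove_symm_apply, Fin.insertNthEquiv,
        Fin.prod_univ_succ, Fin.insertNth_zero]
      simp only [Fin.zero_succAbove, Function.comp_def, Fin.cons_zero, Fin.cons_succ,
        Equiv.coe_fn_mk]
      have h2 : Integrable (fun x : Fin m → E => ∏ j : Fin m, f (Fin.succ j) (x j))
          (Measure.pi fun _ => μ) := ih (fun i => hf _)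
      exact Integrable.mul_prod (hf 0) h2

theorem pi_integral_prod {m : ℕ} {E : Type} [MeasurableSpace E] (μ : Measure E) [SigmaFinite μ]
    (f : Fin m → E → ℝ) :
    ∫ x : Fin m → E, ∏ i, f i (x i) ∂(Measure.pi fun _ => μ) = ∏ i, ∫ x, f i x ∂μ := by
  induction m with
  | zero =>
      simp only [Finset.univ_eq_empty, Finset.prod_empty, integral_const]
      simp [Measure.pi_of_empty]
      simp [Measure.real, Measure.pi_of_empty]
  | succ m ih =>
      calc
        ∫ x : Fin (m+1) → E, ∏ i, f i (x i) ∂(Measure.pi fun _ => μ)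
            = ∫ z : E × (Fin m → E), f 0 z.1 * ∏ i : Fin m, f (Fin.succ i) (z.2 i)
              ∂(μ.prod (Measure.pi fun _ => μ)) := by
          rw [← ((measurePreserving_piFinSuccAbove (fun _ : Fin (m+1) => μ) 0).symm).integral_comp']
          simp_rw [MeasurableEquiv.piFinSuccAbove_symm_apply, Fin.insertNthEquiv,
            Fin.prod_univ_succ, Fin.insertNth_zero, Equiv.coe_fn_mk, Fin.cons_succ, Fin.cons_zero, cast_eq]
        _ = (∫ x, f 0 x ∂μ) * ∏ i : Fin m, ∫ x, f (Fin.succ i) x ∂μ := by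
          rw [← ih, ← integral_prod_mul (μ := μ) (ν := Measure.pi fun _ : Fin m => μ) (f 0) (fun x : Fin m → E => ∏ i : Fin m, f i.succ (x i))]
        _ = ∏ i, ∫ x, f i x ∂μ := by rw [Fin.prod_univ_succ]


lemma integral_monomial {n : ℕ} (k : Fin n → ℕ) :
    (∫ w : Fin n → ℝ, ∏ e, w e ^ k e ∂stdGaussian n) = ∏ e, mom (k e) :=
  pi_integral_prod (gaussianReal 0 1) (fun e x => x ^ k e)

lemma integrable_monomial {n : ℕ} (k : Fin n → ℕ) (hk : ∀ e, k e ≤ 4) :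
    Integrable (fun w : Fin n → ℝ => ∏ e, w e ^ k e) (stdGaussian n) :=
  pi_integrable_prod (fun e => integrable_pow_gaussianReal (hk e))

lemma prod_single {n : ℕ} (w : Fin n → ℝ) (a : Fin n) :
    (∏ e, w e ^ (if e = a then 1 else 0)) = w a := by
  rw [Finset.prod_eq_single a (fun e _ he => by simp [he]) (fun h => absurd (Finset.mem_univ a) h)]
  simp

lemma prod_univ_pair {α : Type*} [Fintype α] [DecidableEq α] {a c : α} (h : a ≠ c) {f : α → ℝ}
    (hf : ∀ e, e ≠ a → e ≠ c → f e = 1) : (∏ e, f e) = f a * f c := by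
  rw [← Finset.prod_pair h]
  symm
  apply Finset.prod_subset (Finset.subset_univ _)
  intro x _ hx
  simp only [Finset.mem_insert, Finset.mem_singleton, not_or] at hx
  exact hf x hx.1 hx.2

lemma mono2 {n : ℕ} (w : Fin n → ℝ) (a b : Fin n) :
    w a * w b = ∏ e, w e ^ ((if e = a then 1 else 0) + (if e = b then 1 else 0)) := by
  simp only [pow_add, Finset.prod_mul_distrib, prod_single]

lemma mono4 {n : ℕ} (w : Fin n → ℝ) (a b c d : Fin n) :
    w a * w b * (w c * w d) = ∏ e, w e ^ ((if e = a then 1 else 0) + (if e = b then 1 else 0)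
      + (if e = c then 1 else 0) + (if e = d then 1 else 0)) := by
  simp only [pow_add, Finset.prod_mul_distrib, prod_single]
  ring

lemma m2 {n : ℕ} (a b : Fin n) :
    (∫ w : Fin n → ℝ, w a * w b ∂stdGaussian n) = if a = b then (1:ℝ) else 0 := by
  simp_rw [mono2]
  rw [integral_monomial]
  by_cases hab : a = b
  · subst hab
    rw [if_pos rfl]
    apply Finset.prod_eq_one
    intro e _
    by_cases he : e = a
    · simp [he, mom_two]
    · simp [he, mom_zero]
  · rw [if_neg hab]
    apply Finset.prod_eq_zero (Finset.mem_univ a)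
    simp [hab, mom_one]

lemma m4 {n : ℕ} (a b c d : Fin n) :
    (∫ w : Fin n → ℝ, w a * w b * (w c * w d) ∂stdGaussian n) =
      (if a = b then (1:ℝ) else 0) * (if c = d then 1 else 0)
      + (if a = c then (1:ℝ) else 0) * (if b = d then 1 else 0)
      + (if a = d then (1:ℝ) else 0) * (if b = c then 1 else 0) := by
  simp_rw [mono4]
  rw [integral_monomial]
  by_cases h1 : a = b
  · subst h1
    by_cases h2 : c = d
    · subst h2
      by_cases h3 : a = c
      · subst h3
        rw [Finset.prod_eq_single a (fun e _ he => by simp [he, mom_zero])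
          (fun h => absurd (Finset.mem_univ a) h)]
        norm_num [mom_four]
      · have h3' : c ≠ a := Ne.symm h3
        have hL : (∏ e, mom ((if e = a then 1 else 0) + (if e = a then 1 else 0)
            + (if e = c then 1 else 0) + (if e = c then 1 else 0))) = 1 := by
          apply Finset.prod_eq_one
          intro e _
          by_cases hea : e = a
          · simp [hea, h3, mom_two]
          · by_cases hec : e = c
            · simp [hea, hec, h3', mom_two]
            · simp [hea, hec, mom_zero]
        rw [hL]
        simp [h3]
    · have hL : (∏ e, mom ((if e = a then 1 else 0) + (if e = a then 1 else 0)
          + (if e = c then 1 else 0) + (if e = d then 1 else 0))) = 0 := by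
        apply Finset.prod_eq_zero (Finset.mem_univ d)
        have hdc : d ≠ c := Ne.symm h2
        by_cases hda : d = a
        · have hac' : a ≠ c := fun h => hdc (hda.trans h)
          simp [hda, hdc, hac', mom_three]
        · simp [hda, hdc, mom_one]
      rw [hL]
      by_cases hac : a = c
      · have had : a ≠ d := fun h => h2 (hac ▸ h)
        simp [h2, hac, had]
      · simp [h2, hac]
  · by_cases h2 : c = d
    · subst h2
      have hL : (∏ e, mom ((if e = a then 1 else 0) + (if e = b then 1 else 0)
          + (if e = c then 1 else 0) + (if e = c then 1 else 0))) = 0 := by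
        apply Finset.prod_eq_zero (Finset.mem_univ b)
        have hba : b ≠ a := Ne.symm h1
        by_cases hbc : b = c
        · have hca : c ≠ a := fun h => hba (hbc.trans h)
          simp [hba, hbc, hca, mom_three]
        · simp [hba, hbc, mom_one]
      rw [hL]
      by_cases hac : a = c
      · have hbc : b ≠ c := fun h => h1 (hac.trans h.symm)
        simp [h1, hac, hbc, Ne.symm hbc]
      · simp [h1, hac]
    · by_cases h3 : a = c
      · subst h3
        by_cases h4 : b = d
        · subst h4
          have hL : (∏ e, mom ((if e = a then 1 else 0) + (if e = b then 1 else 0)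
              + (if e = a then 1 else 0) + (if e = b then 1 else 0))) = 1 := by
            rw [prod_univ_pair h1 (f := fun e => mom ((if e = a then 1 else 0)
              + (if e = b then 1 else 0) + (if e = a then 1 else 0) + (if e = b then 1 else 0)))
              (fun e hea heb => by simp [hea, heb, mom_zero])]
            have hba : b ≠ a := Ne.symm h1
            simp [h1, hba, mom_two]
          rw [hL]
          simp [h1, h2]
        · have hL : (∏ e, mom ((if e = a then 1 else 0) + (if e = b then 1 else 0)
              + (if e = a then 1 else 0) + (if e = d then 1 else 0))) = 0 := by
            apply Finset.prod_eq_zero (Finset.mem_univ d)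
            have hda : d ≠ a := fun h => h2 h.symm
            have hdb : d ≠ b := Ne.symm h4
            simp [hda, hdb, mom_one]
          rw [hL]
          simp [h1, h2, h4]
      · by_cases h5 : a = d
        · subst h5
          by_cases h6 : b = c
          · subst h6
            have hL : (∏ e, mom ((if e = a then 1 else 0) + (if e = b then 1 else 0)
                + (if e = b then 1 else 0) + (if e = a then 1 else 0))) = 1 := by
              rw [prod_univ_pair h1 (f := fun e => mom ((if e = a then 1 else 0)
                + (if e = b then 1 else 0) + (if e = b then 1 else 0) + (if e = a then 1 else 0)))
                (fun e hea heb => by simp [hea, heb, mom_zero])]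
              have hba : b ≠ a := Ne.symm h1
              simp [h1, hba, mom_two]
            rw [hL]
            simp [h1, h3]
          · have hL : (∏ e, mom ((if e = a then 1 else 0) + (if e = b then 1 else 0)
                + (if e = c then 1 else 0) + (if e = a then 1 else 0))) = 0 := by
              apply Finset.prod_eq_zero (Finset.mem_univ b)
              have hba : b ≠ a := Ne.symm h1
              simp [hba, h6, mom_one]
            rw [hL]
            simp [h1, h3, h6]
        · have hL : (∏ e, mom ((if e = a then 1 else 0) + (if e = b then 1 else 0)
              + (if e = c then 1 else 0) + (if e = d then 1 else 0))) = 0 := by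
            apply Finset.prod_eq_zero (Finset.mem_univ a)
            have hab : a ≠ b := h1
            simp [hab, h3, h5, mom_one]
          rw [hL]
          simp [h1, h3, h5]

section Quad
variable {n : ℕ} (B : Matrix (Fin n) (Fin n) ℝ)

lemma integrable_mono2 (a b : Fin n) :
    Integrable (fun w : Fin n → ℝ => w a * w b) (stdGaussian n) := by
  have h : (fun w : Fin n → ℝ => w a * w b)
      = fun w => ∏ e, w e ^ ((if e = a then 1 else 0) + (if e = b then 1 else 0)) :=
    funext fun w => mono2 w a b
  rw [h]
  exact integrable_monomial _ (fun e => by split <;> split <;> omega)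

lemma integrable_mono4 (a b c d : Fin n) :
    Integrable (fun w : Fin n → ℝ => w a * w b * (w c * w d)) (stdGaussian n) := by
  have h : (fun w : Fin n → ℝ => w a * w b * (w c * w d))
      = fun w => ∏ e, w e ^ ((if e = a then 1 else 0) + (if e = b then 1 else 0)
        + (if e = c then 1 else 0) + (if e = d then 1 else 0)) :=
    funext fun w => mono4 w a b c d
  rw [h]
  exact integrable_monomial _ (fun e => by split <;> split <;> split <;> split <;> omega)

lemma q_eq : (fun w : Fin n → ℝ => w ⬝ᵥ B.mulVec w)
    = fun w => ∑ p : Fin n × Fin n, B p.1 p.2 * (w p.1 * w p.2) := by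
  funext w
  rw [dotProduct, Fintype.sum_prod_type]
  congr 1
  funext a
  rw [Matrix.mulVec, dotProduct, Finset.mul_sum]
  congr 1
  funext b
  ring

lemma integrable_q : Integrable (fun w : Fin n → ℝ => w ⬝ᵥ B.mulVec w) (stdGaussian n) := by
  rw [q_eq]
  exact integrable_finset_sum _ (fun p _ => (integrable_mono2 p.1 p.2).const_mul _)

lemma integral_q : (∫ w : Fin n → ℝ, w ⬝ᵥ B.mulVec w ∂stdGaussian n) = B.trace := by
  rw [q_eq, integral_finset_sum _ (fun p _ => (integrable_mono2 p.1 p.2).const_mul _)]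
  have h : ∀ p : Fin n × Fin n, (∫ w : Fin n → ℝ, B p.1 p.2 * (w p.1 * w p.2) ∂stdGaussian n)
      = B p.1 p.2 * (if p.1 = p.2 then (1:ℝ) else 0) := by
    intro p
    rw [MeasureTheory.integral_const_mul, m2]
  rw [Finset.sum_congr rfl (fun p _ => h p)]
  rw [Fintype.sum_prod_type]
  simp [Matrix.trace, Matrix.diag, Finset.sum_ite_eq]

lemma q_sq_eq : (fun w : Fin n → ℝ => (w ⬝ᵥ B.mulVec w) ^ 2)
    = fun w => ∑ p : Fin n × Fin n, ∑ r : Fin n × Fin n,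
        B p.1 p.2 * B r.1 r.2 * (w p.1 * w p.2 * (w r.1 * w r.2)) := by
  funext w
  rw [show (w ⬝ᵥ B.mulVec w) ^ 2 = (w ⬝ᵥ B.mulVec w) * (w ⬝ᵥ B.mulVec w) from sq _]
  rw [congrFun (q_eq B) w, Finset.sum_mul_sum]
  apply Finset.sum_congr rfl
  intro p _
  apply Finset.sum_congr rfl
  intro r _
  ring

lemma integrable_q_sq : Integrable (fun w : Fin n → ℝ => (w ⬝ᵥ B.mulVec w) ^ 2)
    (stdGaussian n) := by
  rw [q_sq_eq]
  exact integrable_finset_sum _ (fun p _ => integrable_finset_sum _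
    (fun r _ => (integrable_mono4 p.1 p.2 r.1 r.2).const_mul _))

lemma integral_q_sq (hB : B.IsSymm) :
    (∫ w : Fin n → ℝ, (w ⬝ᵥ B.mulVec w) ^ 2 ∂stdGaussian n) = B.trace ^ 2 + 2 * frobSq B := by
  rw [q_sq_eq, integral_finset_sum _ (fun p _ => integrable_finset_sum _
    (fun r _ => (integrable_mono4 p.1 p.2 r.1 r.2).const_mul _))]
  have h1 : ∀ p : Fin n × Fin n,
      (∫ w : Fin n → ℝ, ∑ r : Fin n × Fin n,
        B p.1 p.2 * B r.1 r.2 * (w p.1 * w p.2 * (w r.1 * w r.2)) ∂stdGaussian n)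
      = ∑ r : Fin n × Fin n, B p.1 p.2 * B r.1 r.2 *
          ((if p.1 = p.2 then (1:ℝ) else 0) * (if r.1 = r.2 then 1 else 0)
          + (if p.1 = r.1 then (1:ℝ) else 0) * (if p.2 = r.2 then 1 else 0)
          + (if p.1 = r.2 then (1:ℝ) else 0) * (if p.2 = r.1 then 1 else 0)) := by
    intro p
    rw [integral_finset_sum _ (fun r _ => (integrable_mono4 p.1 p.2 r.1 r.2).const_mul _)]
    apply Finset.sum_congr rfl
    intro r _
    rw [MeasureTheory.integral_const_mul, m4]
  rw [Finset.sum_congr rfl (fun p _ => h1 p)]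
  have expand : ∀ p r : Fin n × Fin n, B p.1 p.2 * B r.1 r.2 *
          ((if p.1 = p.2 then (1:ℝ) else 0) * (if r.1 = r.2 then 1 else 0)
          + (if p.1 = r.1 then (1:ℝ) else 0) * (if p.2 = r.2 then 1 else 0)
          + (if p.1 = r.2 then (1:ℝ) else 0) * (if p.2 = r.1 then 1 else 0))
      = (B p.1 p.2 * (if p.1 = p.2 then (1:ℝ) else 0))
          * (B r.1 r.2 * (if r.1 = r.2 then (1:ℝ) else 0))
        + B p.1 p.2 * B r.1 r.2 * ((if p.1 = r.1 then (1:ℝ) else 0) * (if p.2 = r.2 then 1 else 0))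
        + B p.1 p.2 * B r.1 r.2 * ((if p.1 = r.2 then (1:ℝ) else 0) * (if p.2 = r.1 then 1 else 0)) :=
    fun p r => by ring
  simp_rw [expand, Finset.sum_add_distrib]
  have htr : (∑ p : Fin n × Fin n, B p.1 p.2 * (if p.1 = p.2 then (1:ℝ) else 0)) = B.trace := by
    rw [Fintype.sum_prod_type]
    simp [Matrix.trace, Matrix.diag, Finset.sum_ite_eq]
  have hT1 : (∑ p : Fin n × Fin n, ∑ r : Fin n × Fin n,
      (B p.1 p.2 * (if p.1 = p.2 then (1:ℝ) else 0))
        * (B r.1 r.2 * (if r.1 = r.2 then (1:ℝ) else 0))) = B.trace ^ 2 := by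
    rw [← Finset.sum_mul_sum, htr, sq]
  have hT2 : (∑ p : Fin n × Fin n, ∑ r : Fin n × Fin n,
      B p.1 p.2 * B r.1 r.2 * ((if p.1 = r.1 then (1:ℝ) else 0) * (if p.2 = r.2 then 1 else 0)))
      = frobSq B := by
    have inner : ∀ p : Fin n × Fin n, (∑ r : Fin n × Fin n,
        B p.1 p.2 * B r.1 r.2 * ((if p.1 = r.1 then (1:ℝ) else 0) * (if p.2 = r.2 then 1 else 0)))
        = B p.1 p.2 ^ 2 := by
      intro p
      rw [Fintype.sum_prod_type]
      simp [mul_ite, ite_mul, Finset.sum_ite_eq, sq]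
    rw [Finset.sum_congr rfl (fun p _ => inner p), frobSq, Fintype.sum_prod_type]
  have hT3 : (∑ p : Fin n × Fin n, ∑ r : Fin n × Fin n,
      B p.1 p.2 * B r.1 r.2 * ((if p.1 = r.2 then (1:ℝ) else 0) * (if p.2 = r.1 then 1 else 0)))
      = frobSq B := by
    have inner : ∀ p : Fin n × Fin n, (∑ r : Fin n × Fin n,
        B p.1 p.2 * B r.1 r.2 * ((if p.1 = r.2 then (1:ℝ) else 0) * (if p.2 = r.1 then 1 else 0)))
        = B p.1 p.2 ^ 2 := by
      intro p
      rw [Fintype.sum_prod_type]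
      have hsymm : B p.2 p.1 = B p.1 p.2 := by
        conv_lhs => rw [← hB]
        rfl
      simp [mul_ite, ite_mul, Finset.sum_ite_eq, Finset.sum_ite_eq', sq, hsymm]
    rw [Finset.sum_congr rfl (fun p _ => inner p), frobSq, Fintype.sum_prod_type]
  rw [hT1, hT2, hT3]
  ring
end Quad

instance stdGaussian_prob (n : ℕ) : IsProbabilityMeasure (stdGaussian n) := by
  unfold _root_.stdGaussian
  infer_instance

section Main
variable {n : ℕ} (B : Matrix (Fin n) (Fin n) ℝ)

noncomputable def gfun (w : Fin n → ℝ) : ℝ := w ⬝ᵥ B.mulVec w - B.trace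

lemma gfun_sq (w : Fin n → ℝ) : gfun B w ^ 2
    = (w ⬝ᵥ B.mulVec w) ^ 2 - 2 * B.trace * (w ⬝ᵥ B.mulVec w) + B.trace ^ 2 := by
  rw [gfun]; ring

lemma integrable_gfun : Integrable (gfun B) (stdGaussian n) :=
  (integrable_q B).sub (integrable_const _)

lemma integrable_gfun_sq : Integrable (fun w => gfun B w ^ 2) (stdGaussian n) := by
  simp_rw [gfun_sq]
  exact ((integrable_q_sq B).sub ((integrable_q B).const_mul _)).add (integrable_const _)

lemma integral_gfun : (∫ w, gfun B w ∂stdGaussian n) = 0 := by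
  rw [show gfun B = fun w => w ⬝ᵥ B.mulVec w - B.trace from rfl]
  rw [integral_sub (integrable_q B) (integrable_const _), integral_q, integral_const]
  simp

lemma integral_gfun_sq (hB : B.IsSymm) :
    (∫ w, gfun B w ^ 2 ∂stdGaussian n) = 2 * frobSq B := by
  have hpt : ∀ w : Fin n → ℝ, gfun B w ^ 2
      = (w ⬝ᵥ B.mulVec w) ^ 2 - (2 * B.trace * (w ⬝ᵥ B.mulVec w) - B.trace ^ 2) := by
    intro w; rw [gfun]; ring
  have hg1 : Integrable (fun w : Fin n → ℝ =>
      2 * B.trace * (w ⬝ᵥ B.mulVec w) - B.trace ^ 2) (stdGaussian n) :=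
    ((integrable_q B).const_mul _).sub (integrable_const _)
  have hqc : Integrable (fun w : Fin n → ℝ =>
      2 * B.trace * (w ⬝ᵥ B.mulVec w)) (stdGaussian n) := (integrable_q B).const_mul _
  simp_rw [hpt]
  rw [integral_sub (integrable_q_sq B) hg1, integral_sub hqc (integrable_const _),
    integral_q_sq B hB, MeasureTheory.integral_const_mul, integral_q, integral_const]
  simp
  ring

end Main
end AuxGH

theorem stmt2 {n N : ℕ} (hN : 1 ≤ N) (B : Matrix (Fin n) (Fin n) ℝ) (hB : B.IsSymm) :
    (∫ w : Fin N → Fin n → ℝ,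
        ((1 / (N : ℝ)) * ∑ i, w i ⬝ᵥ B.mulVec (w i) - B.trace) ^ 2
        ∂(Measure.pi fun _ : Fin N => stdGaussian n))
      = 2 / (N : ℝ) * frobSq B := by

  have hNne : (N : ℝ) ≠ 0 := Nat.cast_ne_zero.mpr (by omega)
  have hpt : ∀ w : Fin N → Fin n → ℝ,
      ((1 / (N : ℝ)) * ∑ i, w i ⬝ᵥ B.mulVec (w i) - B.trace) ^ 2
      = (1 / (N : ℝ) ^ 2) * ∑ p : Fin N × Fin N, gfun B (w p.1) * gfun B (w p.2) := by
    intro w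
    have h1 : (1 / (N : ℝ)) * ∑ i, w i ⬝ᵥ B.mulVec (w i) - B.trace
        = (1 / (N : ℝ)) * ∑ i, gfun B (w i) := by
      simp_rw [gfun, Finset.sum_sub_distrib, Finset.sum_const, Finset.card_univ,
        Fintype.card_fin]
      field_simp
      rw [nsmul_eq_mul]
    rw [h1]
    conv_rhs => rw [Fintype.sum_prod_type]
    rw [mul_pow, sq (∑ i, gfun B (w i)), Finset.sum_mul_sum]
    simp only []
    ring
  simp_rw [hpt]
  -- per-pair integral
  have hpair : ∀ p : Fin N × Fin N,
      (∫ w : Fin N → Fin n → ℝ, gfun B (w p.1) * gfun B (w p.2)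
        ∂(Measure.pi fun _ : Fin N => stdGaussian n))
      = if p.1 = p.2 then 2 * frobSq B else 0 := by
    intro p
    by_cases hp : p.1 = p.2
    · rw [if_pos hp]
      have heq : (fun w : Fin N → Fin n → ℝ => gfun B (w p.1) * gfun B (w p.2))
          = fun w => ∏ k, (fun (k : Fin N) (v : Fin n → ℝ) =>
              if k = p.1 then gfun B v ^ 2 else 1) k (w k) := by
        funext w
        rw [Finset.prod_eq_single p.1 (fun k _ hk => by simp [hk]) (by simp)]
        simp [← hp, sq]
      rw [heq, pi_integral_prod (stdGaussian n) (fun (k : Fin N) (v : Fin n → ℝ) => if k = p.1 then gfun B v ^ 2 else 1)]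
      rw [Finset.prod_eq_single p.1 (fun k _ hk => by simp [hk]) (by simp)]
      simp only [if_pos rfl]
      exact integral_gfun_sq B hB
    · rw [if_neg hp]
      have heq : (fun w : Fin N → Fin n → ℝ => gfun B (w p.1) * gfun B (w p.2))
          = fun w => ∏ k, (fun (k : Fin N) (v : Fin n → ℝ) =>
              if k = p.1 then gfun B v else if k = p.2 then gfun B v else 1) k (w k) := by
        funext w
        rw [prod_univ_pair hp (f := fun k => if k = p.1 then gfun B (w k)
            else if k = p.2 then gfun B (w k) else 1) (fun k hk1 hk2 => by simp [hk1, hk2])]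
        simp [hp, Ne.symm hp]
      rw [heq, pi_integral_prod (stdGaussian n) (fun (k : Fin N) (v : Fin n → ℝ) => if k = p.1 then gfun B v else if k = p.2 then gfun B v else 1)]
      apply Finset.prod_eq_zero (Finset.mem_univ p.1)
      simp only [if_pos rfl]
      exact integral_gfun B
  have hint : ∀ p : Fin N × Fin N,
      Integrable (fun w : Fin N → Fin n → ℝ => gfun B (w p.1) * gfun B (w p.2))
        (Measure.pi fun _ : Fin N => stdGaussian n) := by
    intro p
    by_cases hp : p.1 = p.2
    · have heq : (fun w : Fin N → Fin n → ℝ => gfun B (w p.1) * gfun B (w p.2))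
          = fun w => ∏ k, (fun (k : Fin N) (v : Fin n → ℝ) =>
              if k = p.1 then gfun B v ^ 2 else 1) k (w k) := by
        funext w
        rw [Finset.prod_eq_single p.1 (fun k _ hk => by simp [hk]) (by simp)]
        simp [← hp, sq]
      rw [heq]
      apply pi_integrable_prod (f := fun (k : Fin N) (v : Fin n → ℝ) =>
        if k = p.1 then gfun B v ^ 2 else 1)
      intro k
      by_cases hk : k = p.1
      · simpa [hk] using integrable_gfun_sq B
      · simp only [hk, if_false]
        exact integrable_const _
    · have heq : (fun w : Fin N → Fin n → ℝ => gfun B (w p.1) * gfun B (w p.2))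
          = fun w => ∏ k, (fun (k : Fin N) (v : Fin n → ℝ) =>
              if k = p.1 then gfun B v else if k = p.2 then gfun B v else 1) k (w k) := by
        funext w
        rw [prod_univ_pair hp (f := fun k => if k = p.1 then gfun B (w k)
            else if k = p.2 then gfun B (w k) else 1) (fun k hk1 hk2 => by simp [hk1, hk2])]
        simp [hp, Ne.symm hp]
      rw [heq]
      apply pi_integrable_prod (f := fun (k : Fin N) (v : Fin n → ℝ) =>
        if k = p.1 then gfun B v else if k = p.2 then gfun B v else 1)
      intro k
      by_cases hk1 : k = p.1
      · simpa [hk1, hp] using integrable_gfun B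
      · by_cases hk2 : k = p.2
        · simpa [hk1, hk2] using integrable_gfun B
        · simp only [hk1, hk2, if_false]
          exact integrable_const _
  rw [MeasureTheory.integral_const_mul,
    integral_finset_sum _ (fun p _ => hint p),
    Finset.sum_congr rfl (fun p _ => hpair p)]
  rw [Fintype.sum_prod_type]
  simp only [Finset.sum_ite_eq, Finset.mem_univ, if_true]
  rw [Finset.sum_const, Finset.card_univ, Fintype.card_fin]
  field_simp
  ring
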